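/- Let d ≥ 3 be an integer and suppose Q₁,...,Q_r : F_2^n → F_2 are classical polynomials of degree at most d-1 with Q_i(0) = 0 for all i, and suppose there is a function Γ : F_2^r → ℝ/ℤ such that Γ(Q_1(x),...,Q_r(x)) = NOR(x) for all x, where NOR(x) = 1/2 if x = 0 and NOR(x) = 0 otherwise. Then r ≥ n/(d-1). -/
import Mathlib


/-- The NOR function: `1/2` at the zero vector, `0` elsewhere. -/
noncomputable def NOR (n : ℕ) (x : Fin n → ZMod 2) : AddCircle (1 : ℝ) :=
  if x = 0 then (((1 : ℝ) / 2 : ℝ) : AddCircle (1 : ℝ)) else 0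

set_option maxHeartbeats 1000000 in
theorem stmt_17 (n d r : ℕ) (hd : 3 ≤ d)
    (Q : Fin r → MvPolynomial (Fin n) (ZMod 2))
    (hdeg : ∀ i, (Q i).totalDegree ≤ d - 1)
    (hQ0 : ∀ i, MvPolynomial.eval (0 : Fin n → ZMod 2) (Q i) = 0)
    (Γ : (Fin r → ZMod 2) → AddCircle (1 : ℝ))
    (hΓ : ∀ x, Γ (fun i => MvPolynomial.eval x (Q i)) = NOR n x) :
    n ≤ r * (d - 1) := by
  by_contra hlt
  push_neg at hlt
  have hsum : (∑ i, (Q i).totalDegree) < Fintype.card (Fin n) := by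
    calc (∑ i, (Q i).totalDegree) ≤ ∑ _i : Fin r, (d - 1) :=
          Finset.sum_le_sum fun i _ => hdeg i
      _ = r * (d - 1) := by simp [Finset.sum_const, mul_comm]
      _ < n := hlt
      _ = Fintype.card (Fin n) := (Fintype.card_fin n).symm
  have hdvd : 2 ∣ Fintype.card { x : Fin n → ZMod 2 // ∀ i, MvPolynomial.eval x (Q i) = 0 } :=
    by convert char_dvd_card_solutions_of_fintype_sum_lt 2 hsum using 2
  have hpos : 0 < Fintype.card { x : Fin n → ZMod 2 // ∀ i, MvPolynomial.eval x (Q i) = 0 } :=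
    Fintype.card_pos_iff.mpr ⟨⟨0, hQ0⟩⟩
  have hcard : 1 < Fintype.card { x : Fin n → ZMod 2 // ∀ i, MvPolynomial.eval x (Q i) = 0 } := by
    omega
  obtain ⟨y, hy⟩ := Fintype.exists_ne_of_one_lt_card hcard ⟨0, hQ0⟩
  have hyne : (y : Fin n → ZMod 2) ≠ 0 := fun h => hy (Subtype.ext h)
  have h1 : Γ (fun i => MvPolynomial.eval (y : Fin n → ZMod 2) (Q i)) = 0 := by
    rw [hΓ]; simp [NOR, hyne]
  have h2 : Γ (fun i => MvPolynomial.eval (0 : Fin n → ZMod 2) (Q i)) =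
      (((1 : ℝ) / 2 : ℝ) : AddCircle (1 : ℝ)) := by
    rw [hΓ]; simp [NOR]
  have heq : (fun i => MvPolynomial.eval (y : Fin n → ZMod 2) (Q i)) =
      (fun i => MvPolynomial.eval (0 : Fin n → ZMod 2) (Q i)) := by
    funext i; rw [y.2 i, hQ0 i]
  rw [heq, h2] at h1
  rw [AddCircle.coe_eq_zero_iff] at h1
  obtain ⟨m, hm⟩ := h1
  have : (m : ℝ) = 1 / 2 := by simpa using hm
  have : (2 : ℝ) * m = 1 := by rw [this]; ring
  have h2m : (2 * m : ℤ) = 1 := by exact_mod_cast this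
  omega
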